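/- The McGehee parametrization S of the arc of collinear configurations satisfies: for every s ∈ [−1,1], (i) S(s) ∈ Q and S(s)ᵀM S(s) = 1; (ii) S(−1) = c and S(1) = d; (iii) the separations are S₂(s) − S₁(s) = (d₂ − d₁)·sin(λ(1+s))/sin(2λ) and S₃(s) − S₂(s) = (c₃ − c₂)·sin(λ(1−s))/sin(2λ), so in particular S₁(s) ≤ S₂(s) ≤ S₃(s) with equality only at s = −1 resp. s = 1; and (iv) S is real analytic with S'(s) = λ·Ã·S(s). -/

import Mathlib

open Real Matrix

theorem analyticAt_sin_aux (x : ℝ) : AnalyticAt ℝ Real.sin x := by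
  have h1 : AnalyticAt ℂ Complex.sin (x : ℂ) :=
    Complex.differentiable_sin.analyticAt _
  have h3 : AnalyticAt ℝ (fun t : ℝ => Complex.sin t) x :=
    h1.restrictScalars.comp (Complex.ofRealCLM.analyticAt x)
  have h4 : AnalyticAt ℝ (fun t : ℝ => (Complex.sin (t : ℂ)).re) x :=
    (Complex.reCLM.analyticAt _).comp h3
  have h5 : (fun t : ℝ => (Complex.sin (t : ℂ)).re) = Real.sin :=
    funext fun t => Complex.sin_ofReal_re t
  rwa [h5] at h4

set_option maxHeartbeats 2000000 in
theorem mcgehee_parametrization_properties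
    (m1 m2 m3 : ℝ) (hm1 : 0 < m1) (hm2 : 0 < m2) (hm3 : 0 < m3)
    (M A1 A2 At : Matrix (Fin 3) (Fin 3) ℝ)
    (hM : M = Matrix.diagonal ![m1, m2, m3])
    (hA1 : A1 = Matrix.of fun _ _ => (1 : ℝ))
    (hA2 : A2 = !![0, 1, -1; -1, 0, 1; 1, -1, 0])
    (hAt : At = (1 / (m1 + m2 + m3)) • (A1 * M)
            + Real.sqrt (m1 * m2 * m3 / (m1 + m2 + m3)) • (M⁻¹ * A2))
    (c d : Fin 3 → ℝ)
    (hc : c = ![-Real.sqrt (m3 / ((m1 + m2) * (m1 + m2 + m3))),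
                -Real.sqrt (m3 / ((m1 + m2) * (m1 + m2 + m3))),
                Real.sqrt ((m1 + m2) / (m3 * (m1 + m2 + m3)))])
    (hd : d = ![-Real.sqrt ((m2 + m3) / (m1 * (m1 + m2 + m3))),
                Real.sqrt (m1 / ((m2 + m3) * (m1 + m2 + m3))),
                Real.sqrt (m1 / ((m2 + m3) * (m1 + m2 + m3)))])
    (lam : ℝ) (hlam : lam ∈ Set.Ioo 0 (Real.pi / 4))
    (hlam2 : Real.cos (2 * lam) = c ⬝ᵥ M.mulVec d)
    (S : ℝ → Fin 3 → ℝ)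
    (hS : ∀ s : ℝ, S s = (Real.sin (2 * lam))⁻¹ •
      (Real.sin (lam * (1 - s)) • c + Real.sin (lam * (1 + s)) • d)) :
    (∀ s ∈ Set.Icc (-1 : ℝ) 1,
      (m1 * S s 0 + m2 * S s 1 + m3 * S s 2 = 0) ∧ S s ⬝ᵥ M.mulVec (S s) = 1) ∧
    S (-1) = c ∧ S 1 = d ∧
    (∀ s ∈ Set.Icc (-1 : ℝ) 1,
      S s 1 - S s 0 = (d 1 - d 0) * Real.sin (lam * (1 + s)) / Real.sin (2 * lam) ∧
      S s 2 - S s 1 = (c 2 - c 1) * Real.sin (lam * (1 - s)) / Real.sin (2 * lam)) ∧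
    (∀ s ∈ Set.Icc (-1 : ℝ) 1,
      S s 0 ≤ S s 1 ∧ S s 1 ≤ S s 2 ∧
      (S s 0 = S s 1 ↔ s = -1) ∧ (S s 1 = S s 2 ↔ s = 1)) ∧
    (∀ s : ℝ, AnalyticAt ℝ S s) ∧
    (∀ s : ℝ, HasDerivAt S (lam • At.mulVec (S s)) s) := by
  obtain ⟨hlam0, hlam4⟩ := hlam
  have hpi := Real.pi_pos
  have hm : (0:ℝ) < m1 + m2 + m3 := by linarith
  have h12 : (0:ℝ) < m1 + m2 := by linarith
  have h23 : (0:ℝ) < m2 + m3 := by linarith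
  set α := Real.sqrt (m3 / ((m1 + m2) * (m1 + m2 + m3))) with hαdef
  set δ := Real.sqrt (m1 / ((m2 + m3) * (m1 + m2 + m3))) with hδdef
  have hαpos : 0 < α := Real.sqrt_pos.2 (div_pos hm3 (mul_pos h12 hm))
  have hδpos : 0 < δ := Real.sqrt_pos.2 (div_pos hm1 (mul_pos h23 hm))
  have hα2 : ((m1 + m2) * (m1 + m2 + m3)) * α ^ 2 = m3 := by
    rw [Real.sq_sqrt (le_of_lt (div_pos hm3 (mul_pos h12 hm)))]
    field_simp
  have hδ2 : ((m2 + m3) * (m1 + m2 + m3)) * δ ^ 2 = m1 := by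
    rw [Real.sq_sqrt (le_of_lt (div_pos hm1 (mul_pos h23 hm)))]
    field_simp
  have hγ : Real.sqrt ((m1 + m2) / (m3 * (m1 + m2 + m3))) = ((m1 + m2) / m3) * α := by
    rw [hαdef, show (m1 + m2) / (m3 * (m1 + m2 + m3))
        = ((m1 + m2) / m3) ^ 2 * (m3 / ((m1 + m2) * (m1 + m2 + m3))) by field_simp,
      Real.sqrt_mul (sq_nonneg _), Real.sqrt_sq (le_of_lt (div_pos h12 hm3))]
  have hβ : Real.sqrt ((m2 + m3) / (m1 * (m1 + m2 + m3))) = ((m2 + m3) / m1) * δ := by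
    rw [hδdef, show (m2 + m3) / (m1 * (m1 + m2 + m3))
        = ((m2 + m3) / m1) ^ 2 * (m1 / ((m2 + m3) * (m1 + m2 + m3))) by field_simp,
      Real.sqrt_mul (sq_nonneg _), Real.sqrt_sq (le_of_lt (div_pos h23 hm1))]
  have hc' : c = ![-α, -α, ((m1 + m2) / m3) * α] := by rw [hc, hγ]
  have hd' : d = ![-(((m2 + m3) / m1) * δ), δ, δ] := by rw [hd, hβ]
  set e := Real.cos (2 * lam) with hedef
  set p := Real.sin (2 * lam) with hpdef
  have hppos : 0 < p := Real.sin_pos_of_pos_of_lt_pi (by linarith) (by linarith)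
  have hepos : 0 < e := Real.cos_pos_of_mem_Ioo ⟨by linarith, by linarith⟩
  have hpe : p ^ 2 + e ^ 2 = 1 := Real.sin_sq_add_cos_sq (2 * lam)
  have he : e = (m1 + m2 + m3) * α * δ := by
    rw [hlam2, hc', hd', hM]
    simp [dotProduct, Matrix.mulVec_diagonal, Fin.sum_univ_three]
    field_simp
    ring
  set k := Real.sqrt (m1 * m2 * m3 / (m1 + m2 + m3)) with hkdef
  have hknn : 0 ≤ k := Real.sqrt_nonneg _
  have hk2 : k ^ 2 = m1 * m2 * m3 / (m1 + m2 + m3) :=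
    Real.sq_sqrt (le_of_lt (div_pos (mul_pos (mul_pos hm1 hm2) hm3) hm))
  have he2 : (m1 + m2) * (m2 + m3) * e ^ 2 = m1 * m3 := by
    rw [he]
    have : (m1 + m2) * (m2 + m3) * ((m1 + m2 + m3) * α * δ) ^ 2
        = ((m1 + m2) * (m1 + m2 + m3) * α ^ 2) * ((m2 + m3) * (m1 + m2 + m3) * δ ^ 2) := by
      ring
    rw [this, hα2, hδ2]; ring
  have hkp : k * p = m2 * e := by
    have h1 : (k * p) ^ 2 = (m2 * e) ^ 2 := by
      have hp2 : p ^ 2 = 1 - e ^ 2 := by linarith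
      have hk2' : (m1 + m2 + m3) * k ^ 2 = m1 * m2 * m3 := by rw [hk2]; field_simp
      have h0 : ((m1 + m2) * (m2 + m3) * (m1 + m2 + m3)) * ((k * p) ^ 2)
          = ((m1 + m2) * (m2 + m3) * (m1 + m2 + m3)) * ((m2 * e) ^ 2) := by
        linear_combination ((m1 + m2) * (m2 + m3) * (1 - e ^ 2)) * hk2'
          - (m1 * m2 * m3 + (m1 + m2 + m3) * m2 ^ 2) * he2
          + ((m1 + m2) * (m2 + m3) * (m1 + m2 + m3) * k ^ 2) * hp2
      exact mul_left_cancel₀ (by positivity) h0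
    calc k * p = Real.sqrt ((k * p) ^ 2) := (Real.sqrt_sq (by positivity)).symm
    _ = Real.sqrt ((m2 * e) ^ 2) := by rw [h1]
    _ = m2 * e := Real.sqrt_sq (by positivity)
  have heα : (m1 + m2) * (e * α) = m3 * δ := by
    rw [he]
    have h : (m1 + m2) * ((m1 + m2 + m3) * α * δ * α)
        = ((m1 + m2) * (m1 + m2 + m3) * α ^ 2) * δ := by ring
    rw [h, hα2]
  have heδ : (m2 + m3) * (e * δ) = m1 * α := by
    rw [he]
    have h : (m2 + m3) * ((m1 + m2 + m3) * α * δ * δ)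
        = ((m2 + m3) * (m1 + m2 + m3) * δ ^ 2) * α := by ring
    rw [h, hδ2]
  have hMinv : M⁻¹ = Matrix.diagonal ![m1⁻¹, m2⁻¹, m3⁻¹] := by
    apply Matrix.inv_eq_right_inv
    rw [hM, Matrix.diagonal_mul_diagonal]
    convert Matrix.diagonal_one using 2
    funext i; fin_cases i <;> simp [hm1.ne', hm2.ne', hm3.ne']
  have hsumc : m1 * c 0 + m2 * c 1 + m3 * c 2 = 0 := by
    rw [hc']; simp [Matrix.cons_val_zero, Matrix.cons_val_one]; field_simp; ring
  have hsumd : m1 * d 0 + m2 * d 1 + m3 * d 2 = 0 := by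
    rw [hd']; simp [Matrix.cons_val_zero, Matrix.cons_val_one]; field_simp; ring
  have hA1M : ∀ v : Fin 3 → ℝ, m1 * v 0 + m2 * v 1 + m3 * v 2 = 0 →
      (A1 * M).mulVec v = 0 := by
    intro v hv
    funext i
    rw [hA1, hM]
    fin_cases i <;>
      simp [Matrix.mulVec, dotProduct, Fin.sum_univ_three, Matrix.mul_apply,
        Matrix.diagonal] <;>
      linear_combination hv
  have hAtv : ∀ v : Fin 3 → ℝ, m1 * v 0 + m2 * v 1 + m3 * v 2 = 0 →
      p • At.mulVec v = (m2 * e) • ((M⁻¹ * A2).mulVec v) := by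
    intro v hv
    rw [hAt, Matrix.add_mulVec, Matrix.smul_mulVec, Matrix.smul_mulVec,
      hA1M v hv]
    rw [smul_zero, zero_add, smul_smul]
    congr 1
    linear_combination hkp
  have hAtc : p • At.mulVec c = d - e • c := by
    rw [hAtv c hsumc]
    funext i
    rw [hMinv, hA2, hc', hd']
    fin_cases i
    · simp [Matrix.mulVec, dotProduct, Fin.sum_univ_three, Matrix.mul_apply,
        Matrix.diagonal]
      field_simp
      linear_combination (-(m2 + m3)) * heα
    · simp [Matrix.mulVec, dotProduct, Fin.sum_univ_three, Matrix.mul_apply,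
        Matrix.diagonal]
      field_simp
      linear_combination heα
    · simp [Matrix.mulVec, dotProduct, Fin.sum_univ_three, Matrix.mul_apply,
        Matrix.diagonal]
      field_simp
      linear_combination heα
  have hAtd : p • At.mulVec d = e • d - c := by
    rw [hAtv d hsumd]
    funext i
    rw [hMinv, hA2, hc', hd']
    fin_cases i
    · simp [Matrix.mulVec, dotProduct, Fin.sum_univ_three, Matrix.mul_apply,
        Matrix.diagonal]
      field_simp
      linear_combination heδ
    · simp [Matrix.mulVec, dotProduct, Fin.sum_univ_three, Matrix.mul_apply,
        Matrix.diagonal]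
      field_simp
      linear_combination heδ
    · simp [Matrix.mulVec, dotProduct, Fin.sum_univ_three, Matrix.mul_apply,
        Matrix.diagonal]
      field_simp
      linear_combination (-(m1 + m2)) * heδ
  have hSapp : ∀ (s : ℝ) (i : Fin 3), S s i
      = p⁻¹ * (Real.sin (lam * (1 - s)) * c i + Real.sin (lam * (1 + s)) * d i) := by
    intro s i
    rw [hS s]
    simp [Pi.smul_apply, Pi.add_apply, smul_eq_mul]
  have htrig1 : ∀ s : ℝ, Real.sin (lam * (1 + s))
      = p * Real.cos (lam * (1 - s)) - e * Real.sin (lam * (1 - s)) := by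
    intro s
    rw [show lam * (1 + s) = 2 * lam - lam * (1 - s) by ring, Real.sin_sub]
  have htrig2 : ∀ s : ℝ, Real.sin (lam * (1 - s))
      = p * Real.cos (lam * (1 + s)) - e * Real.sin (lam * (1 + s)) := by
    intro s
    rw [show lam * (1 - s) = 2 * lam - lam * (1 + s) by ring, Real.sin_sub]
  have hcc : m1 * c 0 ^ 2 + m2 * c 1 ^ 2 + m3 * c 2 ^ 2 = 1 := by
    rw [hc']
    simp only [Matrix.cons_val_zero, Matrix.cons_val_one, Matrix.head_cons,
      Matrix.cons_val_two, Matrix.tail_cons]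
    field_simp
    linear_combination hα2
  have hdd : m1 * d 0 ^ 2 + m2 * d 1 ^ 2 + m3 * d 2 ^ 2 = 1 := by
    rw [hd']
    simp only [Matrix.cons_val_zero, Matrix.cons_val_one, Matrix.head_cons,
      Matrix.cons_val_two, Matrix.tail_cons]
    field_simp
    linear_combination hδ2
  have hcd : m1 * (c 0 * d 0) + m2 * (c 1 * d 1) + m3 * (c 2 * d 2) = e := by
    rw [hc', hd']
    simp only [Matrix.cons_val_zero, Matrix.cons_val_one, Matrix.head_cons,
      Matrix.cons_val_two, Matrix.tail_cons]
    rw [he]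
    field_simp
    ring
  have hsep1 : ∀ s : ℝ, S s 1 - S s 0
      = (d 1 - d 0) * Real.sin (lam * (1 + s)) / p := by
    intro s
    have h10 : c 0 = c 1 := by rw [hc']; simp
    rw [hSapp, hSapp]
    field_simp
    linear_combination (-(Real.sin (lam * (1 - s)))) * h10
  have hsep2 : ∀ s : ℝ, S s 2 - S s 1
      = (c 2 - c 1) * Real.sin (lam * (1 - s)) / p := by
    intro s
    have h12 : d 1 = d 2 := by rw [hd']; simp
    rw [hSapp, hSapp]
    field_simp
    linear_combination (-(Real.sin (lam * (1 + s)))) * h12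
  have hd10 : 0 < d 1 - d 0 := by
    rw [hd']
    simp only [Matrix.cons_val_zero, Matrix.cons_val_one, Matrix.head_cons]
    have : 0 < (m2 + m3) / m1 * δ := by positivity
    linarith
  have hc21 : 0 < c 2 - c 1 := by
    rw [hc']
    simp only [Matrix.cons_val_zero, Matrix.cons_val_one, Matrix.head_cons, Matrix.cons_val_two, Matrix.tail_cons]
    have : 0 < (m1 + m2) / m3 * α := by positivity
    linarith
  refine ⟨?_, ?_, ?_, ?_, ?_, ?_, ?_⟩
  · -- center of mass and unit norm
    intro s hs
    constructor
    · rw [hSapp, hSapp, hSapp]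
      linear_combination (p⁻¹ * Real.sin (lam * (1 - s))) * hsumc
        + (p⁻¹ * Real.sin (lam * (1 + s))) * hsumd
    · have hkey : Real.sin (lam * (1 - s)) ^ 2
          + 2 * e * (Real.sin (lam * (1 - s)) * Real.sin (lam * (1 + s)))
          + Real.sin (lam * (1 + s)) ^ 2 = p ^ 2 := by
        have h2 := Real.sin_sq_add_cos_sq (lam * (1 + s))
        linear_combination (Real.sin (lam * (1 - s)) + p * Real.cos (lam * (1 + s))
            + e * Real.sin (lam * (1 + s))) * (htrig2 s) + p ^ 2 * h2
          - (Real.sin (lam * (1 + s))) ^ 2 * hpe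
      rw [hM]
      simp only [dotProduct, Matrix.mulVec_diagonal, Fin.sum_univ_three,
        Matrix.cons_val_zero, Matrix.cons_val_one, Matrix.head_cons,
        Matrix.cons_val_two, Matrix.tail_cons, hSapp]
      field_simp
      linear_combination (Real.sin (lam * (1 - s))) ^ 2 * hcc
        + (2 * Real.sin (lam * (1 - s)) * Real.sin (lam * (1 + s))) * hcd
        + (Real.sin (lam * (1 + s))) ^ 2 * hdd + hkey
  · -- S (-1) = c
    funext i
    rw [hSapp]
    norm_num
    rw [show lam * 2 = 2 * lam by ring]
    rw [← hpdef]
    field_simp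
  · -- S 1 = d
    funext i
    rw [hSapp]
    norm_num
    rw [show lam * 2 = 2 * lam by ring]
    rw [← hpdef]
    field_simp
  · intro s hs
    exact ⟨hsep1 s, hsep2 s⟩
  · -- ordering
    intro s hs
    obtain ⟨hsl, hsr⟩ := hs
    have hb1 : lam * (1 + s) ≤ lam * 2 := mul_le_mul_of_nonneg_left (by linarith) hlam0.le
    have hb2 : lam * (1 - s) ≤ lam * 2 := mul_le_mul_of_nonneg_left (by linarith) hlam0.le
    have hy0 : 0 ≤ Real.sin (lam * (1 + s)) := by
      apply Real.sin_nonneg_of_nonneg_of_le_pi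
      · exact mul_nonneg hlam0.le (by linarith)
      · linarith
    have hx0 : 0 ≤ Real.sin (lam * (1 - s)) := by
      apply Real.sin_nonneg_of_nonneg_of_le_pi
      · exact mul_nonneg hlam0.le (by linarith)
      · linarith
    have hle1 : S s 0 ≤ S s 1 := by
      have h := hsep1 s
      have h2 : 0 ≤ (d 1 - d 0) * Real.sin (lam * (1 + s)) / p := by positivity
      linarith
    have hle2 : S s 1 ≤ S s 2 := by
      have h := hsep2 s
      have h2 : 0 ≤ (c 2 - c 1) * Real.sin (lam * (1 - s)) / p := by positivity
      linarith
    refine ⟨hle1, hle2, ?_, ?_⟩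
    · constructor
      · intro h
        have h0 : (d 1 - d 0) * Real.sin (lam * (1 + s)) / p = 0 := by
          rw [← hsep1]; linarith
        have hsin : Real.sin (lam * (1 + s)) = 0 := by
          rw [div_eq_zero_iff] at h0
          rcases h0 with h0 | h0
          · rcases mul_eq_zero.mp h0 with h1 | h1
            · linarith
            · exact h1
          · exact absurd h0 hppos.ne'
        by_contra hne
        have h1s : 0 < 1 + s := lt_of_le_of_ne (by linarith) (by intro h'; exact hne (by linarith))
        have := Real.sin_pos_of_pos_of_lt_pi (x := lam * (1 + s)) (by positivity) (by linarith)
        linarith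
      · intro h
        subst h
        have h0 := hsep1 (-1)
        rw [show lam * (1 + (-1 : ℝ)) = 0 by ring, Real.sin_zero] at h0
        have h1 : S (-1) 1 - S (-1) 0 = 0 := by rw [h0]; ring
        linarith
    · constructor
      · intro h
        have h0 : (c 2 - c 1) * Real.sin (lam * (1 - s)) / p = 0 := by
          rw [← hsep2]; linarith
        have hsin : Real.sin (lam * (1 - s)) = 0 := by
          rw [div_eq_zero_iff] at h0
          rcases h0 with h0 | h0
          · rcases mul_eq_zero.mp h0 with h1 | h1
            · linarith
            · exact h1
          · exact absurd h0 hppos.ne'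
        by_contra hne
        have h1s : 0 < 1 - s := lt_of_le_of_ne (by linarith) (by intro h'; exact hne (by linarith))
        have := Real.sin_pos_of_pos_of_lt_pi (x := lam * (1 - s)) (by positivity) (by linarith)
        linarith
      · intro h
        subst h
        have h0 := hsep2 1
        rw [show lam * (1 - (1 : ℝ)) = 0 by ring, Real.sin_zero] at h0
        have h1 : S 1 2 - S 1 1 = 0 := by rw [h0]; ring
        linarith
  · -- analyticity
    intro s
    have hSf : S = fun t => p⁻¹ • (Real.sin (lam * (1 - t)) • c + Real.sin (lam * (1 + t)) • d) :=
      funext hS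
    rw [hSf]
    have h1 : AnalyticAt ℝ (fun t : ℝ => Real.sin (lam * (1 - t))) s :=
      (analyticAt_sin_aux _).comp (analyticAt_const.mul (analyticAt_const.sub analyticAt_id))
    have h2 : AnalyticAt ℝ (fun t : ℝ => Real.sin (lam * (1 + t))) s :=
      (analyticAt_sin_aux _).comp (analyticAt_const.mul (analyticAt_const.add analyticAt_id))
    exact analyticAt_const.fun_smul ((h1.fun_smul analyticAt_const).fun_add (h2.fun_smul analyticAt_const))
  · -- derivative
    intro s
    have hSf : S = fun t => p⁻¹ • (Real.sin (lam * (1 - t)) • c + Real.sin (lam * (1 + t)) • d) :=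
      funext hS
    have hx' : HasDerivAt (fun t : ℝ => Real.sin (lam * (1 - t)))
        (-lam * Real.cos (lam * (1 - s))) s := by
      have hi : HasDerivAt (fun t : ℝ => lam * (1 - t)) (-lam) s := by
        have := ((hasDerivAt_id s).const_sub (1 : ℝ)).const_mul lam
        simpa using this
      have := (Real.hasDerivAt_sin (lam * (1 - s))).comp s hi
      simpa [mul_comm, Function.comp_def] using this
    have hy' : HasDerivAt (fun t : ℝ => Real.sin (lam * (1 + t)))
        (lam * Real.cos (lam * (1 + s))) s := by
      have hi : HasDerivAt (fun t : ℝ => lam * (1 + t)) lam s := by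
        have := ((hasDerivAt_id s).const_add (1 : ℝ)).const_mul lam
        simpa using this
      have := (Real.hasDerivAt_sin (lam * (1 + s))).comp s hi
      simpa [mul_comm, Function.comp_def] using this
    have hD := ((hx'.smul_const c).add (hy'.smul_const d)).const_smul p⁻¹
    have hAtc' : At.mulVec c = p⁻¹ • (d - e • c) := by
      have := congrArg (fun v => p⁻¹ • v) hAtc
      simpa [smul_smul, inv_mul_cancel₀ hppos.ne'] using this
    have hAtd' : At.mulVec d = p⁻¹ • (e • d - c) := by
      have := congrArg (fun v => p⁻¹ • v) hAtd
      simpa [smul_smul, inv_mul_cancel₀ hppos.ne'] using this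
    have heq : lam • At.mulVec (S s)
        = p⁻¹ • ((-lam * Real.cos (lam * (1 - s))) • c + (lam * Real.cos (lam * (1 + s))) • d) := by
      rw [hS s, Matrix.mulVec_smul, Matrix.mulVec_add, Matrix.mulVec_smul, Matrix.mulVec_smul,
        hAtc', hAtd']
      funext i
      simp only [Pi.smul_apply, Pi.add_apply, Pi.sub_apply, smul_eq_mul]
      field_simp
      linear_combination (-(c i)) * (htrig1 s) + (d i) * (htrig2 s)
    rw [hSf] at heq ⊢
    rw [heq]
    exact hD
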